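/- The barycentric differentiation matrix D exactly differentiates the constant function: D applied to the vector (1,1,…,1) gives the zero vector, and more generally if r is the barycentric rational interpolant of nodal data (f_0,…,f_N) that has no pole at x_i, then r'(x_i) = Σ_j D_{ij} f_j. -/

import Mathlib

/-- The barycentric differentiation matrix kills constants and differentiates the interpolant
exactly at the nodes where it has no pole. -/
theorem diff_matrix_exact (N : ℕ) (x : Fin (N+1) → ℝ) (hx : Function.Injective x)
    (l f : Fin (N+1) → ℝ) (hl : ∀ i, l i ≠ 0)
    (D : Matrix (Fin (N+1)) (Fin (N+1)) ℝ)
    (hD : ∀ i j, i ≠ j → D i j = (l j / l i) * (1 / (x i - x j)))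
    (hDd : ∀ i, D i i = -∑ k ∈ Finset.univ.erase i, (l k / l i) * (1 / (x i - x k)))
    (R : ℝ → ℝ)
    (hR : ∀ t, (∀ i, t ≠ x i) →
      R t = (∑ i, l i * f i / (t - x i)) / (∑ i, l i / (t - x i)))
    (hRi : ∀ i, R (x i) = f i)
    (i : Fin (N+1)) (hdiff : DifferentiableAt ℝ R (x i)) :
    D.mulVec (fun _ => 1) = 0 ∧ deriv R (x i) = ∑ j, D i j * f j := by
  constructor
  · funext k
    simp only [Matrix.mulVec, dotProduct, mul_one, Pi.zero_apply]
    rw [← Finset.add_sum_erase _ _ (Finset.mem_univ k), hDd k,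
      Finset.sum_congr rfl (fun j hj => hD k j (Finset.ne_of_mem_erase hj).symm)]
    ring
  · have hsub : ∀ j ∈ Finset.univ.erase i, x i - x j ≠ 0 := by
      intro j hj
      exact sub_ne_zero.mpr fun h => (Finset.ne_of_mem_erase hj) (hx h.symm)
    set g : ℝ → ℝ := fun t => ∑ j ∈ Finset.univ.erase i, l j * f j / (t - x j) with hgdef
    set h : ℝ → ℝ := fun t => ∑ j ∈ Finset.univ.erase i, l j / (t - x j) with hhdef
    have hgd : DifferentiableAt ℝ g (x i) := by
      apply DifferentiableAt.fun_sum
      intro j hj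
      exact (((differentiableAt_id.sub_const (x j)).inv (hsub j hj)).const_mul
        (l j * f j)).congr_of_eventuallyEq (by filter_upwards with t; simp [div_eq_mul_inv])
    have hhd : DifferentiableAt ℝ h (x i) := by
      apply DifferentiableAt.fun_sum
      intro j hj
      exact (((differentiableAt_id.sub_const (x j)).inv (hsub j hj)).const_mul
        (l j)).congr_of_eventuallyEq (by filter_upwards with t; simp [div_eq_mul_inv])
    set A : ℝ → ℝ := fun t => l i * f i + (t - x i) * g t with hAdef
    set B : ℝ → ℝ := fun t => l i + (t - x i) * h t with hBdef
    have hA : HasDerivAt A (g (x i)) (x i) := by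
      have := (((hasDerivAt_id (x i)).sub_const (x i)).mul hgd.hasDerivAt).const_add
        (l i * f i)
      simpa [hAdef] using this
    have hB : HasDerivAt B (h (x i)) (x i) := by
      have := (((hasDerivAt_id (x i)).sub_const (x i)).mul hhd.hasDerivAt).const_add (l i)
      simpa [hBdef] using this
    have hBne : B (x i) ≠ 0 := by simp [hBdef, hl i]
    have hquot := hA.div hB hBne
    -- R agrees with A/B near x i
    have heq : R =ᶠ[nhds (x i)] fun t => A t / B t := by
      have hcl : IsClosed (x '' {j | j ≠ i}) := (Set.Finite.image x (Set.toFinite _)).isClosed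
      have hmem : (x '' {j | j ≠ i})ᶜ ∈ nhds (x i) := by
        apply hcl.isOpen_compl.mem_nhds
        rintro ⟨j, hj, hje⟩
        exact hj (hx hje)
      filter_upwards [hmem] with t ht
      by_cases hti : t = x i
      · subst hti
        rw [hRi i]
        simp [hAdef, hBdef, hl i]
      · have htj : ∀ j, t ≠ x j := by
          intro j hje
          rcases eq_or_ne j i with rfl | hji
          · exact hti hje
          · exact ht ⟨j, hji, hje.symm⟩
        rw [hR t htj]
        have htine : t - x i ≠ 0 := sub_ne_zero.mpr hti
        have hnum : (t - x i) * ∑ j, l j * f j / (t - x j) = A t := by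
          rw [Finset.mul_sum, ← Finset.add_sum_erase _ _ (Finset.mem_univ i), hAdef]
          simp only
          rw [Finset.mul_sum]
          congr 1
          field_simp
        have hden : (t - x i) * ∑ j, l j / (t - x j) = B t := by
          rw [Finset.mul_sum, ← Finset.add_sum_erase _ _ (Finset.mem_univ i), hBdef]
          simp only
          rw [Finset.mul_sum]
          congr 1
          field_simp
        rw [← hnum, ← hden, mul_div_mul_left _ _ htine]
    have hderiv : deriv R (x i) = (g (x i) * B (x i) - A (x i) * h (x i)) / (B (x i)) ^ 2 := by
      rw [heq.deriv_eq]
      exact hquot.deriv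
    rw [hderiv]
    have hAv : A (x i) = l i * f i := by simp [hAdef]
    have hBv : B (x i) = l i := by simp [hBdef]
    have hsum : ∑ j ∈ Finset.univ.erase i, D i j * f j
        = ∑ j ∈ Finset.univ.erase i, (l j / l i) * (1 / (x i - x j)) * f j :=
      Finset.sum_congr rfl fun j hj => by rw [hD i j (Finset.ne_of_mem_erase hj).symm]
    rw [hAv, hBv, ← Finset.add_sum_erase Finset.univ (fun j => D i j * f j)
      (Finset.mem_univ i), hDd i, hsum, hgdef, hhdef]
    simp only
    rw [Finset.sum_mul, Finset.mul_sum, ← Finset.sum_sub_distrib, Finset.sum_div,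
      neg_mul, Finset.sum_mul, neg_add_eq_sub, ← Finset.sum_sub_distrib]
    refine Finset.sum_congr rfl fun j hj => ?_
    have h1 := hsub j hj
    have h2 := hl i
    field_simp
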